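/- Let θ₁, θ₂ be functions from the set of primes to (0, π) whose pairs are equidistributed with respect to the 2-product Sato-Tate measure, i.e. for all subintervals I₁, I₂ ⊆ [0, π], lim_{x→∞} #{p prime, p ≤ x : (θ₁(p), θ₂(p)) ∈ I₁ × I₂} / #{p prime, p ≤ x} = (4/π²)·∫_{I₁}∫_{I₂} sin²(t₁) sin²(t₂) dt₂ dt₁. Let c₁, c₂ be functions from the set of primes to [−1, 1], let ν be a positive odd integer, and for i = 1, 2 set bᵢ(p) = sin((ν+1)θᵢ(p)) − (cᵢ(p)/√p)·sin(νθᵢ(p)). Then there exist infinitely many primes p with b₁(p)·b₂(p) > 0 and infinitely many primes p with b₁(p)·b₂(p) < 0. -/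

import Mathlib

open Real Filter MeasureTheory


lemma sin_ge_sqrt2' {x : ℝ} (hx : x ∈ Set.Icc (π/4) (3*π/4)) :
    Real.sqrt 2 / 2 ≤ Real.sin x := by
  have hpi := Real.pi_pos
  rw [← Real.sin_pi_div_four]
  rcases le_or_gt x (π/2) with h | h
  · exact Real.strictMonoOn_sin.monotoneOn ⟨by linarith, by linarith⟩
      ⟨by linarith [hx.1], h⟩ hx.1
  · rw [show Real.sin x = Real.sin (π - x) from (Real.sin_pi_sub x).symm]
    exact Real.strictMonoOn_sin.monotoneOn ⟨by linarith, by linarith⟩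
      ⟨by linarith [hx.2], by linarith⟩ (by linarith [hx.2])

lemma integral_sin_sq_pos {a b : ℝ} (h0 : 0 ≤ a) (hab : a < b) (hb : b ≤ π) :
    0 < ∫ t in Set.Icc a b, Real.sin t ^ 2 := by
  rw [MeasureTheory.integral_Icc_eq_integral_Ioc, ← intervalIntegral.integral_of_le hab.le]
  apply intervalIntegral.intervalIntegral_pos_of_pos_on
  · exact (Real.continuous_sin.pow 2).intervalIntegrable a b
  · intro x hx
    have : 0 < Real.sin x :=
      Real.sin_pos_of_pos_of_lt_pi (lt_of_le_of_lt h0 hx.1) (lt_of_lt_of_le hx.2 hb)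
    positivity
  · exact hab

lemma double_integral_pos {a₁ b₁ a₂ b₂ : ℝ} (h0 : 0 ≤ a₁) (hab : a₁ < b₁) (hb : b₁ ≤ π)
    (h0' : 0 ≤ a₂) (hab' : a₂ < b₂) (hb' : b₂ ≤ π) :
    0 < ∫ t₁ in Set.Icc a₁ b₁, ∫ t₂ in Set.Icc a₂ b₂, Real.sin t₁ ^ 2 * Real.sin t₂ ^ 2 := by
  have h1 : (fun t₁ => ∫ t₂ in Set.Icc a₂ b₂, Real.sin t₁ ^ 2 * Real.sin t₂ ^ 2)
      = fun t₁ => Real.sin t₁ ^ 2 * ∫ t₂ in Set.Icc a₂ b₂, Real.sin t₂ ^ 2 := by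
    funext t₁
    rw [MeasureTheory.integral_const_mul]
  rw [h1, MeasureTheory.integral_mul_const]
  exact mul_pos (integral_sin_sq_pos h0 hab hb) (integral_sin_sq_pos h0' hab' hb')

lemma prime_count_tendsto :
    Tendsto (fun x : ℕ => (Nat.card {p : ℕ | p ≤ x ∧ p.Prime} : ℝ)) atTop atTop := by
  have hmono : Monotone (fun x : ℕ => Nat.card {p : ℕ | p ≤ x ∧ p.Prime}) := by
    intro x y hxy
    exact Nat.card_mono ((Set.finite_Iic y).subset (fun p hp => hp.1))
      (fun p hp => ⟨le_trans hp.1 hxy, hp.2⟩)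
  have hub : ∀ n : ℕ, ∃ x : ℕ, n ≤ Nat.card {p : ℕ | p ≤ x ∧ p.Prime} := by
    intro n
    obtain ⟨t, ht, hcard⟩ := Nat.infinite_setOf_prime.exists_subset_card_eq n
    refine ⟨t.sup id, ?_⟩
    have hsub : (↑t : Set ℕ) ⊆ {p : ℕ | p ≤ t.sup id ∧ p.Prime} := by
      intro q hq
      exact ⟨Finset.le_sup (f := id) hq, ht hq⟩
    calc n = Nat.card (↑t : Set ℕ) := by simp [hcard]
      _ ≤ _ := Nat.card_mono ((Set.finite_Iic _).subset (fun p hp => hp.1)) hsub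
  have : Tendsto (fun x : ℕ => Nat.card {p : ℕ | p ≤ x ∧ p.Prime}) atTop atTop :=
    tendsto_atTop_atTop_of_monotone hmono (fun n => (hub n).imp (fun x h => h))
  exact tendsto_natCast_atTop_atTop.comp this

lemma infinite_of_pos_density (P : ℕ → Prop) (L : ℝ) (hL : 0 < L)
    (h : Tendsto (fun x : ℕ => (Nat.card {p : ℕ | p ≤ x ∧ p.Prime ∧ P p} : ℝ) /
        (Nat.card {p : ℕ | p ≤ x ∧ p.Prime} : ℝ)) atTop (nhds L)) :
    {p : ℕ | p.Prime ∧ P p}.Infinite := by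
  by_contra hfin
  rw [Set.not_infinite] at hfin
  set N : ℕ := Nat.card {p : ℕ | p.Prime ∧ P p} with hN
  have hnum : ∀ x : ℕ, (Nat.card {p : ℕ | p ≤ x ∧ p.Prime ∧ P p} : ℝ) ≤ N := by
    intro x
    have : Nat.card {p : ℕ | p ≤ x ∧ p.Prime ∧ P p} ≤ N :=
      Nat.card_mono hfin (fun p (hp : p ≤ x ∧ p.Prime ∧ P p) => ⟨hp.2.1, hp.2.2⟩)
    exact_mod_cast this
  have h1 : ∀ᶠ x : ℕ in atTop, L / 2 <
      (Nat.card {p : ℕ | p ≤ x ∧ p.Prime ∧ P p} : ℝ) /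
        (Nat.card {p : ℕ | p ≤ x ∧ p.Prime} : ℝ) :=
    h.eventually (lt_mem_nhds (by linarith))
  have h2 : ∀ᶠ x : ℕ in atTop,
      2 * (N + 1) / L ≤ (Nat.card {p : ℕ | p ≤ x ∧ p.Prime} : ℝ) :=
    prime_count_tendsto.eventually_ge_atTop _
  obtain ⟨x, hx1, hx2⟩ := (h1.and h2).exists
  have hden : (0 : ℝ) < (Nat.card {p : ℕ | p ≤ x ∧ p.Prime} : ℝ) := by
    refine lt_of_lt_of_le ?_ hx2
    positivity
  rw [lt_div_iff₀ hden] at hx1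
  have : (N : ℝ) + 1 ≤ L / 2 * (Nat.card {p : ℕ | p ≤ x ∧ p.Prime} : ℝ) := by
    calc (N : ℝ) + 1 = L / 2 * (2 * (N + 1) / L) := by field_simp
      _ ≤ _ := by
        apply mul_le_mul_of_nonneg_left hx2 (by linarith)
  linarith [hnum x]

lemma err_bound {p : ℕ} (hp : 3 ≤ p) {c s : ℝ} (hc : |c| ≤ 1) (hs : |s| ≤ 1) :
    |c / Real.sqrt p * s| < Real.sqrt 2 / 2 := by
  have h3 : Real.sqrt 3 ≤ Real.sqrt p := Real.sqrt_le_sqrt (by exact_mod_cast hp)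
  have h3p : (0:ℝ) < Real.sqrt 3 := Real.sqrt_pos.mpr (by norm_num)
  have hpp : (0:ℝ) < Real.sqrt p := lt_of_lt_of_le h3p h3
  have hb : |c / Real.sqrt p * s| ≤ 1 / Real.sqrt 3 := by
    rw [abs_mul, abs_div, abs_of_pos hpp]
    calc |c| / Real.sqrt p * |s| ≤ 1 / Real.sqrt 3 * 1 := by
          apply mul_le_mul (div_le_div₀ zero_le_one hc h3p h3) hs (abs_nonneg _)
          positivity
      _ = 1 / Real.sqrt 3 := by ring
  have key : 1 / Real.sqrt 3 < Real.sqrt 2 / 2 := by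
    rw [div_lt_div_iff₀ h3p (by norm_num : (0:ℝ) < 2)]
    have h6 : Real.sqrt 2 * Real.sqrt 3 = Real.sqrt 6 := by
      rw [← Real.sqrt_mul (by norm_num)]; norm_num
    rw [h6]
    have : (2:ℝ) < Real.sqrt 6 := by
      rw [show (2:ℝ) = Real.sqrt 4 from
        (by rw [show (4:ℝ) = 2^2 by norm_num, Real.sqrt_sq]; norm_num)]
      exact Real.sqrt_lt_sqrt (by norm_num) (by norm_num)
    linarith
  linarith

/-- Analytic core of Theorem 1.3 (positive case): with pair Sato-Tate equidistributed angles
`θᵢ(p) ∈ (0,π)` and `bᵢ(p) = sin((ν+1)θᵢ(p)) − (cᵢ(p)/√p)·sin(νθᵢ(p))`, there are infinitely many primes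
`p` with `b₁(p)b₂(p) > 0` and infinitely many with `b₁(p)b₂(p) < 0`. -/
theorem half_integral_sign_changes_infinitely
    (θ₁ θ₂ : ℕ → ℝ)
    (hθ₁ : ∀ p : ℕ, p.Prime → θ₁ p ∈ Set.Ioo 0 π)
    (hθ₂ : ∀ p : ℕ, p.Prime → θ₂ p ∈ Set.Ioo 0 π)
    (hequi : ∀ a₁ b₁ a₂ b₂ : ℝ,
      0 ≤ a₁ → a₁ ≤ b₁ → b₁ ≤ π → 0 ≤ a₂ → a₂ ≤ b₂ → b₂ ≤ π →
      Tendsto (fun x : ℕ =>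
        (Nat.card {p : ℕ | p ≤ x ∧ p.Prime ∧
          θ₁ p ∈ Set.Icc a₁ b₁ ∧ θ₂ p ∈ Set.Icc a₂ b₂} : ℝ) /
        (Nat.card {p : ℕ | p ≤ x ∧ p.Prime} : ℝ)) atTop
        (nhds ((4 / π ^ 2) *
          ∫ t₁ in Set.Icc a₁ b₁, ∫ t₂ in Set.Icc a₂ b₂,
            Real.sin t₁ ^ 2 * Real.sin t₂ ^ 2)))
    (c₁ c₂ : ℕ → ℝ)
    (hc₁ : ∀ p : ℕ, p.Prime → c₁ p ∈ Set.Icc (-1 : ℝ) 1)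
    (hc₂ : ∀ p : ℕ, p.Prime → c₂ p ∈ Set.Icc (-1 : ℝ) 1)
    (ν : ℕ) (hν : Odd ν) (hν' : 0 < ν)
    (b₁ b₂ : ℕ → ℝ)
    (hb₁ : ∀ p : ℕ, b₁ p =
      Real.sin (((ν : ℝ) + 1) * θ₁ p) - (c₁ p / Real.sqrt p) * Real.sin ((ν : ℝ) * θ₁ p))
    (hb₂ : ∀ p : ℕ, b₂ p =
      Real.sin (((ν : ℝ) + 1) * θ₂ p) - (c₂ p / Real.sqrt p) * Real.sin ((ν : ℝ) * θ₂ p)) :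
    {p : ℕ | p.Prime ∧ 0 < b₁ p * b₂ p}.Infinite ∧
    {p : ℕ | p.Prime ∧ b₁ p * b₂ p < 0}.Infinite := by
  have hpi := Real.pi_pos
  set m : ℝ := (ν : ℝ) + 1 with hm
  have hν1 : (1:ℝ) ≤ (ν:ℝ) := by exact_mod_cast hν'
  have hm2 : (2:ℝ) ≤ m := by rw [hm]; linarith
  have hm0 : (0:ℝ) < m := by linarith
  set a : ℝ := π / (4 * m) with ha
  have ha0 : 0 < a := by rw [ha]; positivity
  have ha8 : a ≤ π / 8 := by
    rw [ha]
    exact div_le_div_of_nonneg_left hpi.le (by norm_num) (by linarith)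
  have h3a : 3 * a ≤ π := by linarith
  have h7a : 7 * a ≤ π := by linarith
  have hma : m * a = π / 4 := by
    rw [ha]; field_simp
  -- sine lower bound on interval A
  have hsinA : ∀ θ : ℝ, θ ∈ Set.Icc a (3*a) → Real.sqrt 2 / 2 ≤ Real.sin (m * θ) := by
    intro θ hθ
    apply sin_ge_sqrt2'
    constructor
    · nlinarith [hθ.1]
    · nlinarith [hθ.2]
  -- sine upper bound on interval B
  have hsinB : ∀ θ : ℝ, θ ∈ Set.Icc (5*a) (7*a) →
      Real.sin (m * θ) ≤ -(Real.sqrt 2 / 2) := by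
    intro θ hθ
    have h1 : Real.sqrt 2 / 2 ≤ Real.sin (m * θ - π) := by
      apply sin_ge_sqrt2'
      constructor
      · nlinarith [hθ.1]
      · nlinarith [hθ.2]
    rw [Real.sin_sub_pi] at h1
    linarith
  -- sign of b₁ on A
  have hbpos₁ : ∀ p : ℕ, p.Prime → 3 ≤ p → θ₁ p ∈ Set.Icc a (3*a) → 0 < b₁ p := by
    intro p hp h3 hA
    rw [hb₁ p]
    have hS := hsinA _ hA
    have hE := err_bound h3 (abs_le.mpr ⟨(hc₁ p hp).1, (hc₁ p hp).2⟩)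
      (Real.abs_sin_le_one ((ν : ℝ) * θ₁ p))
    have h' := abs_lt.mp hE
    linarith [h'.1, h'.2]
  have hbpos₂ : ∀ p : ℕ, p.Prime → 3 ≤ p → θ₂ p ∈ Set.Icc a (3*a) → 0 < b₂ p := by
    intro p hp h3 hA
    rw [hb₂ p]
    have hS := hsinA _ hA
    have hE := err_bound h3 (abs_le.mpr ⟨(hc₂ p hp).1, (hc₂ p hp).2⟩)
      (Real.abs_sin_le_one ((ν : ℝ) * θ₂ p))
    have h' := abs_lt.mp hE
    linarith [h'.1, h'.2]
  have hbneg₂ : ∀ p : ℕ, p.Prime → 3 ≤ p → θ₂ p ∈ Set.Icc (5*a) (7*a) → b₂ p < 0 := by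
    intro p hp h3 hB
    rw [hb₂ p]
    have hS := hsinB _ hB
    have hE := err_bound h3 (abs_le.mpr ⟨(hc₂ p hp).1, (hc₂ p hp).2⟩)
      (Real.abs_sin_le_one ((ν : ℝ) * θ₂ p))
    have h' := abs_lt.mp hE
    linarith [h'.1, h'.2]
  have h4pi : (0:ℝ) < 4 / π ^ 2 := by positivity
  constructor
  · -- positive case
    have hd := hequi a (3*a) a (3*a) ha0.le (by linarith) h3a ha0.le (by linarith) h3a
    have hL : 0 < (4 / π ^ 2) *
        ∫ t₁ in Set.Icc a (3*a), ∫ t₂ in Set.Icc a (3*a),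
          Real.sin t₁ ^ 2 * Real.sin t₂ ^ 2 :=
      mul_pos h4pi (double_integral_pos ha0.le (by linarith) h3a ha0.le (by linarith) h3a)
    have hinf := infinite_of_pos_density
      (fun p => θ₁ p ∈ Set.Icc a (3*a) ∧ θ₂ p ∈ Set.Icc a (3*a)) _ hL hd
    refine ((hinf.diff (Set.finite_Iio 3)).mono ?_)
    rintro p ⟨⟨hp, hA1, hA2⟩, hnot⟩
    have h3 : 3 ≤ p := not_lt.mp hnot
    exact ⟨hp, mul_pos (hbpos₁ p hp h3 hA1) (hbpos₂ p hp h3 hA2)⟩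
  · -- negative case
    have hd := hequi a (3*a) (5*a) (7*a) ha0.le (by linarith) h3a (by linarith) (by linarith) h7a
    have hL : 0 < (4 / π ^ 2) *
        ∫ t₁ in Set.Icc a (3*a), ∫ t₂ in Set.Icc (5*a) (7*a),
          Real.sin t₁ ^ 2 * Real.sin t₂ ^ 2 :=
      mul_pos h4pi (double_integral_pos ha0.le (by linarith) h3a (by linarith) (by linarith) h7a)
    have hinf := infinite_of_pos_density
      (fun p => θ₁ p ∈ Set.Icc a (3*a) ∧ θ₂ p ∈ Set.Icc (5*a) (7*a)) _ hL hd
    refine ((hinf.diff (Set.finite_Iio 3)).mono ?_)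
    rintro p ⟨⟨hp, hA1, hB2⟩, hnot⟩
    have h3 : 3 ≤ p := not_lt.mp hnot
    exact ⟨hp, mul_neg_of_pos_of_neg (hbpos₁ p hp h3 hA1) (hbneg₂ p hp h3 hB2)⟩
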